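/- Fix \(D > 0\). There exists a constant \(c_1 \in (0, 1)\), depending only on \(D\), such that for every \(\Lambda \in SO_3(\mathbb{R})\), \(\int_{SO_3(\mathbb{R})} A\,M_\Lambda(A)\,\mathrm{d}\mu(A) = c_1\,\Lambda\), where \(\mu\) is the Haar probability measure on \(SO_3(\mathbb{R})\) and the integral of the matrix-valued function is taken entrywise. -/

import Mathlib

open scoped Matrix
open MeasureTheory

noncomputable section

/-- The space of real 3×3 matrices. -/
abbrev Mat3 := Matrix (Fin 3) (Fin 3) ℝ

/-- The special orthogonal group `SO₃(ℝ)`. -/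
def SO3T : Type := {A : Mat3 // Aᵀ * A = 1 ∧ A.det = 1}

namespace SO3T

instance : Group SO3T where
  mul A B := ⟨A.1 * B.1, by
    obtain ⟨hA1, hA2⟩ := A.2
    obtain ⟨hB1, hB2⟩ := B.2
    constructor
    · rw [Matrix.transpose_mul, Matrix.mul_assoc, ← Matrix.mul_assoc (A.1)ᵀ, hA1,
        Matrix.one_mul, hB1]
    · rw [Matrix.det_mul, hA2, hB2, mul_one]⟩
  one := ⟨1, by simp⟩
  inv A := ⟨A.1ᵀ, by
    obtain ⟨hA1, hA2⟩ := A.2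
    constructor
    · rw [Matrix.transpose_transpose]; exact mul_eq_one_comm.mp hA1
    · rw [Matrix.det_transpose]; exact hA2⟩
  mul_assoc a b c := Subtype.ext (mul_assoc a.1 b.1 c.1)
  one_mul a := Subtype.ext (one_mul a.1)
  mul_one a := Subtype.ext (mul_one a.1)
  inv_mul_cancel a := Subtype.ext a.2.1

instance : TopologicalSpace SO3T := instTopologicalSpaceSubtype

instance : MeasurableSpace SO3T := borel SO3T

instance : BorelSpace SO3T := ⟨rfl⟩

end SO3T

namespace SO3Aux

@[simp] lemma mul_val (A B : SO3T) : (A * B).val = A.val * B.val := rfl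
@[simp] lemma one_val : (1 : SO3T).val = 1 := rfl
@[simp] lemma inv_val (A : SO3T) : (A⁻¹).val = (A.val)ᵀ := rfl

lemma cont_val : Continuous (fun A : SO3T => A.val) := continuous_subtype_val

instance : IsTopologicalGroup SO3T where
  continuous_mul := by
    apply Continuous.subtype_mk
      (f := fun p : SO3T × SO3T => p.1.val * p.2.val)
    exact (cont_val.comp continuous_fst).matrix_mul (cont_val.comp continuous_snd)
  continuous_inv := by
    apply Continuous.subtype_mk (f := fun A : SO3T => (A.val)ᵀ)
    exact cont_val.matrix_transpose

instance : T2Space SO3T := by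
  unfold SO3T; infer_instance

instance : SecondCountableTopology Mat3 :=
  inferInstanceAs (SecondCountableTopology (Fin 3 → Fin 3 → ℝ))

instance : SecondCountableTopology SO3T :=
  TopologicalSpace.Subtype.secondCountableTopology {A : Mat3 | Aᵀ * A = 1 ∧ A.det = 1}

lemma isCompact_set : IsCompact {A : Mat3 | Aᵀ * A = 1 ∧ A.det = 1} := by
  have hsub : {A : Mat3 | Aᵀ * A = 1 ∧ A.det = 1} ⊆
      Set.pi Set.univ (fun _ : Fin 3 => Set.pi Set.univ fun _ : Fin 3 => Set.Icc (-1:ℝ) 1) := by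
    rintro A ⟨h1, -⟩ i - j -
    have hsum : ∑ k : Fin 3, A k j * A k j = 1 := by
      have := congrFun (congrFun h1 j) j
      simpa [Matrix.mul_apply, Matrix.transpose_apply, Matrix.one_apply] using this
    have hterm : A i j * A i j ≤ 1 := by
      rw [← hsum]
      exact Finset.single_le_sum (f := fun k => A k j * A k j)
        (fun k _ => mul_self_nonneg _) (Finset.mem_univ i)
    have habs : |A i j| ≤ 1 := abs_le_one_iff_mul_self_le_one.mpr hterm
    exact abs_le.mp habs
  refine IsCompact.of_isClosed_subset ?_ ?_ hsub
  · exact (isCompact_univ_pi fun _ => isCompact_univ_pi fun _ => isCompact_Icc)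
  · have h1 : IsClosed {A : Mat3 | Aᵀ * A = 1} :=
      isClosed_singleton.preimage ((continuous_id.matrix_transpose).matrix_mul continuous_id)
    have h2 : IsClosed {A : Mat3 | A.det = 1} :=
      isClosed_singleton.preimage (continuous_id.matrix_det)
    exact h1.inter h2

instance : CompactSpace SO3T :=
  isCompact_iff_compactSpace.mp isCompact_set

end SO3Aux

namespace SO3Aux

example : MeasurableMul SO3T := inferInstance
example : LocallyCompactSpace SO3T := inferInstance
example : MeasurableInv SO3T := inferInstance

variable (μ : Measure SO3T) [IsProbabilityMeasure μ]

lemma rightInv (hinv : ∀ g : SO3T, μ.map (fun A => g * A) = μ) :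
    μ.IsMulRightInvariant := by
  haveI hL : μ.IsMulLeftInvariant := ⟨hinv⟩
  haveI : μ.IsOpenPosMeasure :=
    MeasureTheory.isOpenPosMeasure_of_mulLeftInvariant_of_compact Set.univ isCompact_univ (by simp)
  haveI : μ.IsHaarMeasure := ⟨⟩
  constructor
  intro g
  set ν := μ.map (· * g) with hν
  haveI : IsProbabilityMeasure ν := Measure.isProbabilityMeasure_map (measurable_mul_const g).aemeasurable
  haveI : ν.IsMulLeftInvariant := by infer_instance
  haveI : ν.IsOpenPosMeasure :=
    MeasureTheory.isOpenPosMeasure_of_mulLeftInvariant_of_compact Set.univ isCompact_univ (by simp)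
  haveI : ν.IsHaarMeasure := ⟨⟩
  exact Measure.isHaarMeasure_eq_of_isProbabilityMeasure ν μ

end SO3Aux

namespace SO3Aux

variable {μ : Measure SO3T} [IsProbabilityMeasure μ]

lemma integrable_cont {f : SO3T → ℝ} (hf : Continuous f) : Integrable f μ :=
  hf.integrable_of_hasCompactSupport (isClosed_tsupport f).isCompact

def mk3 (m : Mat3) (h1 : mᵀ * m = 1) (h2 : m.det = 1) : SO3T := ⟨m, h1, h2⟩

def g1 : SO3T := mk3 !![0,-1,0; 1,0,0; 0,0,1]
  (by rw [show (!![0,-1,0; 1,0,0; 0,0,1] : Mat3)ᵀ = !![0,1,0; -1,0,0; 0,0,1] by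
        ext i j; fin_cases i <;> fin_cases j <;> rfl, Matrix.one_fin_three]
      norm_num [Matrix.mul_fin_three])
  (by norm_num [Matrix.det_fin_three, Matrix.cons_val_two, Matrix.vecHead, Matrix.vecTail])

def g2 : SO3T := mk3 !![1,0,0; 0,0,-1; 0,1,0]
  (by rw [show (!![1,0,0; 0,0,-1; 0,1,0] : Mat3)ᵀ = !![1,0,0; 0,0,1; 0,-1,0] by
        ext i j; fin_cases i <;> fin_cases j <;> rfl, Matrix.one_fin_three]
      norm_num [Matrix.mul_fin_three])
  (by norm_num [Matrix.det_fin_three, Matrix.cons_val_two, Matrix.vecHead, Matrix.vecTail])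

def d1 : SO3T := mk3 !![-1,0,0; 0,-1,0; 0,0,1]
  (by rw [show (!![-1,0,0; 0,-1,0; 0,0,1] : Mat3)ᵀ = !![-1,0,0; 0,-1,0; 0,0,1] by
        ext i j; fin_cases i <;> fin_cases j <;> rfl, Matrix.one_fin_three]
      norm_num [Matrix.mul_fin_three])
  (by norm_num [Matrix.det_fin_three, Matrix.cons_val_two, Matrix.vecHead, Matrix.vecTail])

def d2 : SO3T := mk3 !![1,0,0; 0,-1,0; 0,0,-1]
  (by rw [show (!![1,0,0; 0,-1,0; 0,0,-1] : Mat3)ᵀ = !![1,0,0; 0,-1,0; 0,0,-1] by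
        ext i j; fin_cases i <;> fin_cases j <;> rfl, Matrix.one_fin_three]
      norm_num [Matrix.mul_fin_three])
  (by norm_num [Matrix.det_fin_three, Matrix.cons_val_two, Matrix.vecHead, Matrix.vecTail])

end SO3Aux
section Core

namespace SO3Aux

variable {μ : Measure SO3T} [IsProbabilityMeasure μ]

lemma cont_entry (i j : Fin 3) : Continuous (fun A : SO3T => A.val i j) :=
  (continuous_apply j).comp ((continuous_apply i).comp cont_val)

lemma cont_trace : Continuous (fun A : SO3T => Matrix.trace A.val) :=
  cont_val.matrix_trace

lemma entry_mem (A : SO3T) (i j : Fin 3) : A.val i j ∈ Set.Icc (-1:ℝ) 1 := by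
  have h1 := A.2.1
  have hsum : ∑ k : Fin 3, A.val k j * A.val k j = 1 := by
    have := congrFun (congrFun h1 j) j
    simpa [Matrix.mul_apply, Matrix.transpose_apply, Matrix.one_apply] using this
  have hterm := Finset.single_le_sum (f := fun k => A.val k j * A.val k j)
    (fun k _ => mul_self_nonneg _) (Finset.mem_univ i)
  rw [hsum] at hterm
  exact abs_le.mp (abs_le_one_iff_mul_self_le_one.mpr hterm)

lemma trace_le (A : SO3T) : Matrix.trace A.val ≤ 3 := by
  rw [Matrix.trace_fin_three]
  have h0 := (entry_mem A 0 0).2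
  have h1 := (entry_mem A 1 1).2
  have h2 := (entry_mem A 2 2).2
  linarith

variable (μ κ)

/-- the matrix of first moments of the von Mises weight -/
def m (k j : Fin 3) : ℝ := ∫ A : SO3T, Real.exp (κ * Matrix.trace A.val) * A.val k j ∂μ

lemma integrable_m (k j : Fin 3) :
    Integrable (fun A : SO3T => Real.exp (κ * Matrix.trace A.val) * A.val k j) μ :=
  integrable_cont (((Real.continuous_exp.comp (continuous_const.mul cont_trace)).mul
    (cont_entry k j)))

variable [μ.IsMulLeftInvariant] [μ.IsMulRightInvariant]

lemma conj_rel (g : SO3T) (k j : Fin 3) :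
    m μ κ k j = ∑ l, ∑ n, (g.val k l * g.val j n) * m μ κ l n := by
  classical
  set f : SO3T → ℝ := fun A => Real.exp (κ * Matrix.trace A.val) * A.val k j with hf
  have e1 : ∫ A, f (g * A) ∂μ = ∫ A, f A ∂μ :=
    MeasureTheory.integral_mul_left_eq_self f g
  have e2 : ∫ A, f (g * A * g⁻¹) ∂μ = ∫ A, f (g * A) ∂μ := by
    have := MeasureTheory.integral_mul_right_eq_self (μ := μ) (fun A => f (g * A)) g⁻¹
    simpa [mul_assoc] using this
  have key : ∀ A : SO3T, f (g * A * g⁻¹)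
      = ∑ l, ∑ n, (g.val k l * g.val j n) * (Real.exp (κ * Matrix.trace A.val) * A.val l n) := by
    intro A
    have ht : Matrix.trace ((g * A * g⁻¹).val) = Matrix.trace A.val := by
      have : (g * A * g⁻¹).val = g.val * A.val * (g.val)ᵀ := rfl
      rw [this, Matrix.trace_mul_cycle, g.2.1, Matrix.one_mul]
    have hv : (g * A * g⁻¹).val k j = ∑ n, (∑ l, g.val k l * A.val l n) * g.val j n := by
      have : (g * A * g⁻¹).val = g.val * A.val * (g.val)ᵀ := rfl
      rw [this]
      simp [Matrix.mul_apply, Matrix.transpose_apply]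
    rw [hf]
    simp only [ht, hv, Finset.mul_sum, Finset.sum_mul]
    rw [Finset.sum_comm]
    exact Finset.sum_congr rfl fun l _ => Finset.sum_congr rfl fun n _ => by ring
  calc m μ κ k j = ∫ A, f (g * A * g⁻¹) ∂μ := (e2.trans e1).symm
    _ = ∫ A, ∑ l, ∑ n, (g.val k l * g.val j n)
          * (Real.exp (κ * Matrix.trace A.val) * A.val l n) ∂μ := by
        exact MeasureTheory.integral_congr_ae (Filter.Eventually.of_forall key)
    _ = ∑ l, ∑ n, (g.val k l * g.val j n) * m μ κ l n := by
        rw [MeasureTheory.integral_finset_sum _ (fun l _ => ?_)]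
        · exact Finset.sum_congr rfl fun l _ => by
            rw [MeasureTheory.integral_finset_sum _
              (fun n _ => ((integrable_m μ κ l n).const_mul _))]
            exact Finset.sum_congr rfl fun n _ => MeasureTheory.integral_const_mul _ _
        · exact MeasureTheory.integrable_finset_sum _
            (fun n _ => ((integrable_m μ κ l n).const_mul _))

end SO3Aux

end Core
section Scalar
namespace SO3Aux
variable {μ : Measure SO3T} [IsProbabilityMeasure μ] (κ : ℝ)
variable [μ.IsMulLeftInvariant] [μ.IsMulRightInvariant]

set_option maxHeartbeats 1000000 in
lemma Mscalar (k j : Fin 3) : m μ κ k j = if k = j then m μ κ 0 0 else 0 := by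
  have h1 := fun k j => conj_rel (μ := μ) κ g1 k j
  have h2 := fun k j => conj_rel (μ := μ) κ g2 k j
  simp only [Fin.sum_univ_three, g1, g2, mk3] at h1 h2
  have e100 := h1 0 0; have e101 := h1 0 1; have e102 := h1 0 2
  have e110 := h1 1 0; have e111 := h1 1 1; have e112 := h1 1 2
  have e120 := h1 2 0; have e121 := h1 2 1; have e122 := h1 2 2
  have e201 := h2 0 1; have e212 := h2 1 2; have e211 := h2 1 1
  norm_num [Matrix.cons_val_two, Matrix.vecHead, Matrix.vecTail] at e100 e101 e102 e110 e111 e112 e120 e121 e122 e201 e212 e211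
  have d11 : m μ κ 1 1 = m μ κ 0 0 := by linarith
  have d22 : m μ κ 2 2 = m μ κ 0 0 := by linarith
  have z02 : m μ κ 0 2 = 0 := by linarith
  have z12 : m μ κ 1 2 = 0 := by linarith
  have z01 : m μ κ 0 1 = 0 := by linarith
  have z10 : m μ κ 1 0 = 0 := by linarith
  have z20 : m μ κ 2 0 = 0 := by linarith
  have z21 : m μ κ 2 1 = 0 := by linarith
  fin_cases k <;> fin_cases j <;> norm_num <;>
    first | exact z01 | exact z02 | exact z10 | exact z12 | exact z20 | exact z21
          | exact d11 | exact d22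
end SO3Aux
end Scalar
section ZeroMean
namespace SO3Aux
variable {μ : Measure SO3T} [IsProbabilityMeasure μ]

lemma entry_integrable (k j : Fin 3) : Integrable (fun A : SO3T => A.val k j) μ :=
  integrable_cont (cont_entry k j)

lemma N0 [μ.IsMulLeftInvariant] (k j : Fin 3) : (∫ A : SO3T, A.val k j ∂μ) = 0 := by
  have hg : ∀ g : SO3T, (∫ A : SO3T, A.val k j ∂μ)
      = ∑ l, g.val k l * ∫ A : SO3T, A.val l j ∂μ := by
    intro g
    have e1 : ∫ A, ((g * A).val k j : ℝ) ∂μ = ∫ A, A.val k j ∂μ :=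
      MeasureTheory.integral_mul_left_eq_self (fun A : SO3T => A.val k j) g
    have key : ∀ A : SO3T, ((g * A).val k j : ℝ) = ∑ l, g.val k l * A.val l j := by
      intro A
      show (g.val * A.val) k j = _
      rw [Matrix.mul_apply]
    rw [← e1, MeasureTheory.integral_congr_ae (Filter.Eventually.of_forall key),
      MeasureTheory.integral_finset_sum _ (fun l _ => (entry_integrable l j).const_mul _)]
    exact Finset.sum_congr rfl fun l _ => MeasureTheory.integral_const_mul _ _
  have hd1 := hg d1
  have hd2 := hg d2
  simp only [Fin.sum_univ_three, d1, d2, mk3] at hd1 hd2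
  norm_num [Matrix.cons_val_two, Matrix.vecHead, Matrix.vecTail] at hd1 hd2
  fin_cases k <;>
    simp only [Fin.mk_zero, Fin.mk_one, Fin.isValue, id_eq, Fin.zero_eta] at hd1 hd2 ⊢ <;>
    norm_num [Matrix.vecHead, Matrix.vecTail, Matrix.cons_val_zero, Matrix.cons_val_one,
      Matrix.head_cons, Matrix.cons_val_two, Matrix.tail_cons] at hd1 hd2 <;>
    linarith [hd1, hd2]

end SO3Aux
end ZeroMean

open SO3Aux



/-- Consistency relation: there is a constant `c₁ ∈ (0,1)`, depending only on `D`, such that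
for every `Λ ∈ SO₃(ℝ)` the (entrywise) flux of the von Mises distribution satisfies
`∫ A M_Λ(A) dμ(A) = c₁ Λ`.  Here `μ` is the Haar probability measure of `SO₃(ℝ)`
(characterized by left invariance) and `M_Λ(A) = Z⁻¹ exp(Tr(Λᵀ A)/(2D))`. -/
theorem vonMises_flux_consistency (D : ℝ) (hD : 0 < D)
    (μ : Measure SO3T) [IsProbabilityMeasure μ]
    (hinv : ∀ g : SO3T, μ.map (fun A => g * A) = μ)
    (Z : ℝ) (hZ : Z = ∫ A : SO3T, Real.exp (1 / (2 * D) * Matrix.trace A.val) ∂μ) :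
    ∃ c₁ : ℝ, 0 < c₁ ∧ c₁ < 1 ∧
      ∀ (Λ : SO3T) (i j : Fin 3),
        (∫ A : SO3T,
            (Z⁻¹ * Real.exp (1 / (2 * D) * Matrix.trace ((Λ.val)ᵀ * A.val))) * A.val i j ∂μ)
          = c₁ * Λ.val i j := by
  haveI hL : μ.IsMulLeftInvariant := ⟨hinv⟩
  haveI hR : μ.IsMulRightInvariant := SO3Aux.rightInv μ hinv
  haveI : μ.IsOpenPosMeasure :=
    MeasureTheory.isOpenPosMeasure_of_mulLeftInvariant_of_compact Set.univ isCompact_univ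
      (by simp)
  set κ : ℝ := 1 / (2 * D) with hκ
  have hκpos : 0 < κ := by positivity
  set c : ℝ := m μ κ 0 0 with hc
  have hm : ∀ k j, m μ κ k j = if k = j then c else 0 := fun k j => Mscalar κ k j
  have hEint : Integrable (fun A : SO3T => Real.exp (κ * Matrix.trace A.val)) μ :=
    integrable_cont (Real.continuous_exp.comp (continuous_const.mul cont_trace))
  have htr_int : Integrable (fun A : SO3T => Matrix.trace A.val) μ :=
    integrable_cont cont_trace
  have hEtr_int : Integrable
      (fun A : SO3T => Real.exp (κ * Matrix.trace A.val) * Matrix.trace A.val) μ :=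
    integrable_cont ((Real.continuous_exp.comp (continuous_const.mul cont_trace)).mul cont_trace)
  -- ∫ E * tr = 3 c
  have hEtr : ∫ A : SO3T, Real.exp (κ * Matrix.trace A.val) * Matrix.trace A.val ∂μ = 3 * c := by
    have key : ∀ A : SO3T, Real.exp (κ * Matrix.trace A.val) * Matrix.trace A.val
        = ∑ k : Fin 3, Real.exp (κ * Matrix.trace A.val) * A.val k k := by
      intro A; rw [Matrix.trace_fin_three, Fin.sum_univ_three]; ring
    rw [MeasureTheory.integral_congr_ae (Filter.Eventually.of_forall key),
      MeasureTheory.integral_finset_sum _ (fun k _ => integrable_m μ κ k k),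
      Fin.sum_univ_three]
    have h00 : (∫ A : SO3T, Real.exp (κ * Matrix.trace A.val) * A.val 0 0 ∂μ) = c := by
      rw [hc]; rfl
    have h11 : (∫ A : SO3T, Real.exp (κ * Matrix.trace A.val) * A.val 1 1 ∂μ) = c := by
      have := hm 1 1; simpa [m] using this
    have h22 : (∫ A : SO3T, Real.exp (κ * Matrix.trace A.val) * A.val 2 2 ∂μ) = c := by
      have := hm 2 2; simpa [m] using this
    rw [h00, h11, h22]; ring
  -- ∫ tr = 0
  have htr0 : ∫ A : SO3T, Matrix.trace A.val ∂μ = 0 := by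
    have key : ∀ A : SO3T, Matrix.trace A.val
        = ∑ k : Fin 3, A.val k k := by
      intro A; rw [Matrix.trace_fin_three, Fin.sum_univ_three]
    rw [MeasureTheory.integral_congr_ae (Filter.Eventually.of_forall key),
      MeasureTheory.integral_finset_sum _ (fun k _ => entry_integrable k k),
      Fin.sum_univ_three, N0, N0, N0]
    ring
  -- positivity of c
  have hcpos : 0 < c := by
    have hfnn : ∀ A : SO3T,
        0 ≤ (Real.exp (κ * Matrix.trace A.val) - 1) * Matrix.trace A.val := by
      intro A
      rcases le_or_gt 0 (Matrix.trace A.val) with h | h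
      · exact mul_nonneg (by
          have := Real.one_le_exp (mul_nonneg hκpos.le h); linarith) h
      · have h1 : Real.exp (κ * Matrix.trace A.val) - 1 ≤ 0 := by
          have : Real.exp (κ * Matrix.trace A.val) < 1 :=
            Real.exp_lt_one_iff.mpr (by nlinarith)
          linarith
        nlinarith [mul_nonneg (neg_nonneg.2 h1) (neg_nonneg.2 h.le)]
    have hint : Integrable
        (fun A : SO3T => (Real.exp (κ * Matrix.trace A.val) - 1) * Matrix.trace A.val) μ :=
      integrable_cont (((Real.continuous_exp.comp (continuous_const.mul cont_trace)).sub
        continuous_const).mul cont_trace)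
    have hval : ∫ A : SO3T,
        (Real.exp (κ * Matrix.trace A.val) - 1) * Matrix.trace A.val ∂μ = 3 * c := by
      have key : ∀ A : SO3T, (Real.exp (κ * Matrix.trace A.val) - 1) * Matrix.trace A.val
          = Real.exp (κ * Matrix.trace A.val) * Matrix.trace A.val - Matrix.trace A.val := by
        intro A; ring
      rw [MeasureTheory.integral_congr_ae (Filter.Eventually.of_forall key),
        MeasureTheory.integral_sub hEtr_int htr_int, hEtr, htr0]
      ring
    have hpos : 0 < ∫ A : SO3T,
        (Real.exp (κ * Matrix.trace A.val) - 1) * Matrix.trace A.val ∂μ := by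
      rw [MeasureTheory.integral_pos_iff_support_of_nonneg hfnn hint]
      have hsub : {A : SO3T | 0 < Matrix.trace A.val} ⊆
          Function.support (fun A : SO3T =>
            (Real.exp (κ * Matrix.trace A.val) - 1) * Matrix.trace A.val) := by
        intro A hA
        have h1 : (0:ℝ) < Real.exp (κ * Matrix.trace A.val) - 1 := by
          have := Real.one_lt_exp_iff.mpr (mul_pos hκpos hA)
          linarith
        exact ne_of_gt (mul_pos h1 hA)
      have hopen : IsOpen {A : SO3T | 0 < Matrix.trace A.val} :=
        isOpen_lt continuous_const cont_trace
      have hne : (1:SO3T) ∈ {A : SO3T | 0 < Matrix.trace A.val} := by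
        show (0:ℝ) < Matrix.trace (1:SO3T).val
        rw [SO3Aux.one_val, Matrix.trace_one]
        norm_num
      exact (hopen.measure_pos μ ⟨1, hne⟩).trans_le (measure_mono hsub)
    rw [hval] at hpos; linarith
  -- Z > 0
  have hZpos : 0 < Z := by
    rw [hZ]
    rw [MeasureTheory.integral_pos_iff_support_of_nonneg
      (fun A => (Real.exp_pos _).le) hEint]
    have hsupp : Function.support (fun A : SO3T => Real.exp (κ * Matrix.trace A.val))
        = Set.univ := Set.eq_univ_of_forall fun A => (Real.exp_pos _).ne'
    rw [hsupp]
    simp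
  -- c < Z
  have hcZ : c < Z := by
    have hfnn : ∀ A : SO3T,
        0 ≤ Real.exp (κ * Matrix.trace A.val) * (3 - Matrix.trace A.val) := fun A =>
      mul_nonneg (Real.exp_pos _).le (by linarith [trace_le A])
    have hint : Integrable
        (fun A : SO3T => Real.exp (κ * Matrix.trace A.val) * (3 - Matrix.trace A.val)) μ :=
      integrable_cont ((Real.continuous_exp.comp (continuous_const.mul cont_trace)).mul
        (continuous_const.sub cont_trace))
    have hval : ∫ A : SO3T,
        Real.exp (κ * Matrix.trace A.val) * (3 - Matrix.trace A.val) ∂μ = 3 * Z - 3 * c := by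
      have key : ∀ A : SO3T, Real.exp (κ * Matrix.trace A.val) * (3 - Matrix.trace A.val)
          = 3 * Real.exp (κ * Matrix.trace A.val)
            - Real.exp (κ * Matrix.trace A.val) * Matrix.trace A.val := by
        intro A; ring
      rw [MeasureTheory.integral_congr_ae (Filter.Eventually.of_forall key),
        MeasureTheory.integral_sub (hEint.const_mul 3) hEtr_int,
        MeasureTheory.integral_const_mul, hEtr, ← hZ]
    have hpos : 0 < ∫ A : SO3T,
        Real.exp (κ * Matrix.trace A.val) * (3 - Matrix.trace A.val) ∂μ := by
      rw [MeasureTheory.integral_pos_iff_support_of_nonneg hfnn hint]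
      have hsub : {A : SO3T | Matrix.trace A.val < 3} ⊆
          Function.support (fun A : SO3T =>
            Real.exp (κ * Matrix.trace A.val) * (3 - Matrix.trace A.val)) := by
        intro A hA
        exact ne_of_gt (mul_pos (Real.exp_pos _) (by linarith [Set.mem_setOf_eq ▸ hA]))
      have hopen : IsOpen {A : SO3T | Matrix.trace A.val < 3} :=
        isOpen_lt cont_trace continuous_const
      have hne : d1 ∈ {A : SO3T | Matrix.trace A.val < 3} := by
        show Matrix.trace (d1.val) < 3
        norm_num [d1, mk3, Matrix.trace_fin_three, Matrix.cons_val_two, Matrix.vecHead, Matrix.vecTail]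
      exact (hopen.measure_pos μ ⟨d1, hne⟩).trans_le (measure_mono hsub)
    rw [hval] at hpos; linarith
  refine ⟨c / Z, div_pos hcpos hZpos, (div_lt_one hZpos).mpr hcZ, ?_⟩
  intro Λ i j
  have hstep : (∫ A : SO3T,
      (Z⁻¹ * Real.exp (κ * Matrix.trace ((Λ.val)ᵀ * A.val))) * A.val i j ∂μ)
      = Z⁻¹ * ∑ k, Λ.val i k * m μ κ k j := by
    simp_rw [mul_assoc]
    rw [MeasureTheory.integral_const_mul]
    congr 1
    have e1 := MeasureTheory.integral_mul_left_eq_self (μ := μ)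
      (fun A : SO3T => Real.exp (κ * Matrix.trace ((Λ.val)ᵀ * A.val)) * A.val i j) Λ
    rw [← e1]
    have key : ∀ A : SO3T,
        Real.exp (κ * Matrix.trace ((Λ.val)ᵀ * (Λ * A).val)) * (Λ * A).val i j
        = ∑ k, Λ.val i k * (Real.exp (κ * Matrix.trace A.val) * A.val k j) := by
      intro A
      have h1 : (Λ.val)ᵀ * (Λ * A).val = A.val := by
        show (Λ.val)ᵀ * (Λ.val * A.val) = A.val
        rw [← Matrix.mul_assoc, Λ.2.1, Matrix.one_mul]
      have h2 : (Λ * A).val i j = ∑ k, Λ.val i k * A.val k j := by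
        show (Λ.val * A.val) i j = _
        rw [Matrix.mul_apply]
      rw [h1, h2, Finset.mul_sum]
      exact Finset.sum_congr rfl fun k _ => by ring
    rw [MeasureTheory.integral_congr_ae (Filter.Eventually.of_forall key),
      MeasureTheory.integral_finset_sum _ (fun k _ => (integrable_m μ κ k j).const_mul _)]
    exact Finset.sum_congr rfl fun k _ => MeasureTheory.integral_const_mul _ _
  rw [hstep]
  have hsum : ∑ k, Λ.val i k * m μ κ k j = Λ.val i j * c := by
    rw [Fin.sum_univ_three, hm 0 j, hm 1 j, hm 2 j]
    fin_cases j <;> norm_num [Fin.ext_iff] <;> try exact Or.inl rfl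
  rw [hsum, div_eq_inv_mul]
  ring
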